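/- arXiv:1004.2576 — 2 statements merged into one kernel-verified Lean document; each statement's English description precedes it below -/
import Mathlib

section
/- Let A be a self-adjoint trace-class operator on a separable Hilbert space H and let P be an orthogonal projection on H. For t ∈ ℝ, let U(t;B) = e^{iBt}. Then for every t ∈ ℝ, the trace norm satisfies ‖P(U(t;A) − U(t;PAP))P‖_{S₁} ≤ |t| · ‖PA(I−P)‖_{S₁}. -/
open scoped ENNReal

/-- The trace norm of a bounded operator on a Hilbert space, defined as the supremum
over pairs of finite orthonormal families of `∑ j |⟪T e_j, f_j⟫|`. -/
noncomputable def traceNorm {H : Type*} [NormedAddCommGroup H] [InnerProductSpace ℂ H]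
    (T : H →L[ℂ] H) : ℝ≥0∞ :=
  ⨆ (n : ℕ) (e : Fin n → H) (f : Fin n → H)
    (_ : Orthonormal ℂ e) (_ : Orthonormal ℂ f),
      ∑ j, (‖(inner ℂ (T (e j)) (f j) : ℂ)‖₊ : ℝ≥0∞)

/-- `evol t B = e^{iBt}`. -/
noncomputable def evol {H : Type*} [NormedAddCommGroup H] [InnerProductSpace ℂ H]
    [CompleteSpace H] (t : ℝ) (B : H →L[ℂ] H) : H →L[ℂ] H :=
  NormedSpace.exp ((Complex.I * (t : ℂ)) • B)

section Aux

open NormedSpace ContinuousLinearMap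

variable {H : Type*} [NormedAddCommGroup H] [InnerProductSpace ℂ H]

lemma sum_le_traceNorm (T : H →L[ℂ] H) {n : ℕ} {e f : Fin n → H}
    (he : Orthonormal ℂ e) (hf : Orthonormal ℂ f) :
    ∑ j, (‖(inner ℂ (T (e j)) (f j) : ℂ)‖₊ : ℝ≥0∞) ≤ traceNorm T :=
  le_iSup_of_le n <| le_iSup_of_le e <| le_iSup_of_le f <|
    le_iSup_of_le he <| le_iSup_of_le hf le_rfl

lemma traceNorm_le_of_forall (T : H →L[ℂ] H) (C : ℝ≥0∞)
    (h : ∀ (n : ℕ) (e f : Fin n → H), Orthonormal ℂ e → Orthonormal ℂ f →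
      ∑ j, (‖(inner ℂ (T (e j)) (f j) : ℂ)‖₊ : ℝ≥0∞) ≤ C) : traceNorm T ≤ C :=
  iSup_le fun n => iSup_le fun e => iSup_le fun f => iSup_le fun he => iSup_le fun hf =>
    h n e f he hf

lemma traceNorm_add_le (S T : H →L[ℂ] H) :
    traceNorm (S + T) ≤ traceNorm S + traceNorm T := by
  refine traceNorm_le_of_forall _ _ fun n e f he hf => ?_
  calc ∑ j, (‖(inner ℂ ((S + T) (e j)) (f j) : ℂ)‖₊ : ℝ≥0∞)
      ≤ ∑ j, ((‖(inner ℂ (S (e j)) (f j) : ℂ)‖₊ : ℝ≥0∞) + ‖(inner ℂ (T (e j)) (f j) : ℂ)‖₊) := by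
        refine Finset.sum_le_sum fun j _ => ?_
        rw [← ENNReal.coe_add]
        norm_cast
        simpa [inner_add_left] using nnnorm_add_le _ _
    _ = _ + _ := Finset.sum_add_distrib
    _ ≤ _ := add_le_add (sum_le_traceNorm S he hf) (sum_le_traceNorm T he hf)

lemma traceNorm_smul_le (c : ℂ) (T : H →L[ℂ] H) :
    traceNorm (c • T) ≤ (‖c‖₊ : ℝ≥0∞) * traceNorm T := by
  refine traceNorm_le_of_forall _ _ fun n e f he hf => ?_
  have h : ∀ j, (‖(inner ℂ ((c • T) (e j)) (f j) : ℂ)‖₊ : ℝ≥0∞)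
      = ‖c‖₊ * ‖(inner ℂ (T (e j)) (f j) : ℂ)‖₊ := by
    intro j
    rw [← ENNReal.coe_mul]
    norm_cast
    simp [inner_smul_left, nnnorm_mul, mul_comm]
  simp_rw [h, ← Finset.mul_sum]
  exact mul_le_mul_right (sum_le_traceNorm T he hf) _

variable [CompleteSpace H]

lemma orthonormal_unitary {U : H →L[ℂ] H} (hU : star U * U = 1)
    {n : ℕ} {e : Fin n → H} (he : Orthonormal ℂ e) :
    Orthonormal ℂ (fun j => U (e j)) := by
  rw [orthonormal_iff_ite] at he ⊢
  intro i j
  rw [← adjoint_inner_right, ← star_eq_adjoint, ← comp_apply, ← mul_def, hU]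
  exact he i j

lemma traceNorm_unitary_conj_le (U T V : H →L[ℂ] H)
    (hU : U ∈ unitary (H →L[ℂ] H)) (hV : V ∈ unitary (H →L[ℂ] H)) :
    traceNorm (U * T * V) ≤ traceNorm T := by
  refine traceNorm_le_of_forall _ _ fun n e f he hf => ?_
  have he' : Orthonormal ℂ (fun j => V (e j)) := orthonormal_unitary hV.1 he
  have hf' : Orthonormal ℂ (fun j => (star U) (f j)) :=
    orthonormal_unitary ((Unitary.star_mem hU).1) hf
  have key : ∀ j, (inner ℂ ((U * T * V) (e j)) (f j) : ℂ)
      = inner ℂ (T (V (e j))) ((star U) (f j)) := by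
    intro j
    rw [show (U * T * V) (e j) = U (T (V (e j))) from rfl, ← adjoint_inner_right U,
      ← star_eq_adjoint]
  calc ∑ j, (‖(inner ℂ ((U * T * V) (e j)) (f j) : ℂ)‖₊ : ℝ≥0∞)
      = ∑ j, (‖(inner ℂ (T (V (e j))) ((star U) (f j)) : ℂ)‖₊ : ℝ≥0∞) := by simp_rw [key]
    _ ≤ traceNorm T := sum_le_traceNorm T he' hf'

lemma exp_im_unitary {B : H →L[ℂ] H} (hB : IsSelfAdjoint B) (c : ℂ) (hc : star c = -c) :
    exp (c • B) ∈ unitary (H →L[ℂ] H) := by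
  let +nondep : NormedAlgebra ℚ (H →L[ℂ] H) := .restrictScalars ℚ ℂ (H →L[ℂ] H)
  apply exp_mem_unitary_of_mem_skewAdjoint
  rw [skewAdjoint.mem_iff, star_smul, hB.star_eq, hc, neg_smul]

lemma hasDerivAt_exp_aff (B : H →L[ℂ] H) (a b : ℂ) (s : ℝ) :
    HasDerivAt (fun s : ℝ => exp ((a + b * (s : ℂ)) • B))
      (b • (exp ((a + b * (s : ℂ)) • B) * B)) s := by
  have hc : HasDerivAt (fun s : ℝ => a + b * (s : ℂ)) b s := by
    simpa using (Complex.ofRealCLM.hasDerivAt (x := s)).const_mul b |>.const_add a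
  exact (hasDerivAt_exp_smul_const (𝕂 := ℂ) B (a + b * (s : ℂ))).scomp s hc

lemma hasDerivAt_exp_aff' (B : H →L[ℂ] H) (a b : ℂ) (s : ℝ) :
    HasDerivAt (fun s : ℝ => exp ((a + b * (s : ℂ)) • B))
      (b • (B * exp ((a + b * (s : ℂ)) • B))) s := by
  have hc : HasDerivAt (fun s : ℝ => a + b * (s : ℂ)) b s := by
    simpa using (Complex.ofRealCLM.hasDerivAt (x := s)).const_mul b |>.const_add a
  exact (hasDerivAt_exp_smul_const' (𝕂 := ℂ) B (a + b * (s : ℂ))).scomp s hc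

end Aux

set_option maxHeartbeats 1000000 in
open NormedSpace MeasureTheory intervalIntegral in
/-- Duhamel bound for unitary groups of `A` and `PAP`. -/
theorem stmt_3 {H : Type*} [NormedAddCommGroup H] [InnerProductSpace ℂ H]
    [CompleteSpace H] [TopologicalSpace.SeparableSpace H]
    (A P : H →L[ℂ] H) (hAsa : IsSelfAdjoint A) (hAtr : traceNorm A ≠ ⊤)
    (hPidem : IsIdempotentElem P) (hPsa : IsSelfAdjoint P) (t : ℝ) :
    traceNorm (P * (evol t A - evol t (P * A * P)) * P)
      ≤ ENNReal.ofReal |t| * traceNorm (P * A * (1 - P)) := by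
  by_cases ht0 : t = 0
  · subst ht0
    have h0 : P * (evol 0 A - evol 0 (P * A * P)) * P = 0 := by
      simp [evol]
    rw [h0]
    refine le_trans (traceNorm_le_of_forall _ 0 fun n e f he hf => ?_) zero_le
    simp
  set B₁ := P * A * P with hB₁
  set T₀ := P * A * (1 - P) with hT₀def
  by_cases hC : traceNorm T₀ = ⊤
  · have hne : ENNReal.ofReal |t| ≠ 0 := by
      simp only [ne_eq, ENNReal.ofReal_eq_zero, not_le]
      exact abs_pos.mpr ht0
    rw [hC, ENNReal.mul_top hne]
    exact le_top
  -- self-adjointness of B₁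
  have hB₁sa : IsSelfAdjoint B₁ := by
    rw [IsSelfAdjoint, hB₁]
    simp [star_mul, hAsa.star_eq, hPsa.star_eq, mul_assoc]
  -- algebraic facts about P
  have hPP : P * P = P := hPidem
  have hPB : P * B₁ = B₁ := by rw [hB₁, ← mul_assoc, ← mul_assoc, hPP]
  have hBP : B₁ * P = B₁ := by rw [hB₁, mul_assoc, hPP]
  have hcomm : Commute P B₁ := by rw [Commute, SemiconjBy, hPB, hBP]
  have hT₀' : T₀ = P * A - B₁ := by rw [hT₀def, hB₁, mul_sub, mul_one]
  -- the evolutions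
  set E₁ : ℝ → (H →L[ℂ] H) :=
    fun s => exp ((Complex.I * (t : ℂ) + (-Complex.I) * (s : ℂ)) • B₁) with hE₁
  set E₂ : ℝ → (H →L[ℂ] H) :=
    fun s => exp ((0 + Complex.I * (s : ℂ)) • A) with hE₂
  have him : ∀ r : ℝ, star (Complex.I * (r : ℂ)) = -(Complex.I * (r : ℂ)) := by
    intro r; simp [Complex.ext_iff]
  have hE₁u : ∀ s, E₁ s ∈ unitary (H →L[ℂ] H) := by
    intro s
    show exp ((Complex.I * (t : ℂ) + (-Complex.I) * (s : ℂ)) • B₁) ∈ _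
    rw [show Complex.I * (t : ℂ) + (-Complex.I) * (s : ℂ)
        = Complex.I * ((t - s : ℝ) : ℂ) by push_cast; ring]
    exact exp_im_unitary hB₁sa _ (him _)
  have hE₂u : ∀ s, E₂ s ∈ unitary (H →L[ℂ] H) := by
    intro s
    show exp ((0 + Complex.I * (s : ℂ)) • A) ∈ _
    rw [zero_add]
    exact exp_im_unitary hAsa _ (him _)
  have hPE₁ : ∀ s, P * E₁ s = E₁ s * P := fun s =>
    ((hcomm.smul_right _).exp_right).eq
  -- the derivative
  set g : ℝ → (H →L[ℂ] H) := fun s =>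
    ((-Complex.I) • (E₁ s * B₁)) * E₂ s + E₁ s * (Complex.I • (A * E₂ s)) with hg
  have hderiv : ∀ s : ℝ, HasDerivAt (fun u => E₁ u * E₂ u) (g s) s := fun s =>
    (hasDerivAt_exp_aff B₁ _ _ s).mul (hasDerivAt_exp_aff' A _ _ s)
  let +nondep : NormedAlgebra ℚ (H →L[ℂ] H) := .restrictScalars ℚ ℂ (H →L[ℂ] H)
  have hE₁c : Continuous E₁ :=
    exp_continuous.comp (by fun_prop)
  have hE₂c : Continuous E₂ :=
    exp_continuous.comp (by fun_prop)
  have hgc : Continuous g := by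
    rw [hg]; fun_prop
  -- endpoints
  have h1 : E₁ t * E₂ t = evol t A := by
    have hc1 : Complex.I * (t : ℂ) + (-Complex.I) * (t : ℂ) = 0 := by ring
    rw [hE₁, hE₂]
    show exp (_ • B₁) * exp (_ • A) = evol t A
    rw [hc1, zero_smul, exp_zero, one_mul, zero_add, evol]
  have h2 : E₁ 0 * E₂ 0 = evol t B₁ := by
    have hc1 : Complex.I * (t : ℂ) + (-Complex.I) * ((0 : ℝ) : ℂ) = Complex.I * (t : ℂ) := by
      push_cast; ring
    have hc2 : (0 : ℂ) + Complex.I * ((0 : ℝ) : ℂ) = 0 := by push_cast; ring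
    rw [hE₁, hE₂]
    show exp (_ • B₁) * exp (_ • A) = evol t B₁
    rw [hc1, hc2, zero_smul, exp_zero, mul_one, evol]
  -- FTC / Duhamel
  have hintP : IntervalIntegrable (fun s => P * g s * P) volume 0 t :=
    ((continuous_const.mul hgc).mul continuous_const).intervalIntegrable 0 t
  have hFTC : ∫ s in (0:ℝ)..t, P * g s * P
      = P * (evol t A) * P - P * (evol t B₁) * P := by
    have h := integral_eq_sub_of_hasDerivAt
      (f := fun u => P * (E₁ u * E₂ u) * P) (f' := fun s => P * g s * P)
      (fun s _ => ((hderiv s).const_mul P).mul_const P) hintP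
    rw [h, h1, h2]
  have hgoal_op : P * (evol t A - evol t B₁) * P = ∫ s in (0:ℝ)..t, P * g s * P := by
    rw [hFTC, mul_sub, sub_mul]
  -- rewrite the integrand
  have hPgP : ∀ s, P * g s * P = Complex.I • (E₁ s * T₀ * (E₂ s * P)) := by
    intro s
    have h1' : ∀ X : H →L[ℂ] H, P * (E₁ s * X) = E₁ s * (P * X) := fun X => by
      rw [← mul_assoc, hPE₁ s, mul_assoc]
    have h2' : ∀ X : H →L[ℂ] H, P * (B₁ * X) = B₁ * X := fun X => by
      rw [← mul_assoc, hPB]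
    rw [hT₀']
    simp only [hg, mul_add, add_mul, smul_mul_assoc, mul_smul_comm, mul_sub, sub_mul,
      smul_sub, mul_assoc]
    rw [h1', h1', h2']
    simp only [neg_smul]
    abel
  -- the unitary decomposition of P
  set Q : H →L[ℂ] H := (1 : H →L[ℂ] H) - P with hQdef
  set Up : H →L[ℂ] H := P + Complex.I • Q with hUp
  have hQP : Q * P = 0 := by
    rw [hQdef, sub_mul, one_mul, hPP, sub_self]
  have hPQ : P * Q = 0 := by
    rw [hQdef, mul_sub, mul_one, hPP, sub_self]
  have hQQ : Q * Q = Q := by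
    rw [hQdef, sub_mul, one_mul, mul_sub, mul_one, hPP, sub_self, sub_zero]
  have hstarUp : star Up = P + (-Complex.I) • Q := by
    rw [hUp, hQdef]
    simp [star_smul, hPsa.star_eq, Complex.conj_I]
  have hexp : ∀ a b : ℂ, a * b = 1 → (P + a • Q) * (P + b • Q) = 1 := by
    intro a b hab
    have h : (P + a • Q) * (P + b • Q) = P*P + b•(P*Q) + a•(Q*P) + (a*b)•(Q*Q) := by
      simp only [mul_add, add_mul, smul_mul_assoc, mul_smul_comm, smul_smul]
      module
    rw [h, hPP, hPQ, hQP, hQQ, hab, one_smul, smul_zero, smul_zero, add_zero, add_zero,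
      hQdef, add_sub_cancel]
  have hUpu : Up ∈ unitary (H →L[ℂ] H) := by
    rw [Unitary.mem_iff, hstarUp, hUp]
    exact ⟨hexp _ _ (by rw [neg_mul, Complex.I_mul_I, neg_neg]),
      hexp _ _ (by rw [mul_neg, Complex.I_mul_I, neg_neg])⟩
  have hPdecomp : P = (2⁻¹ : ℂ) • (Up + star Up) := by
    rw [hstarUp, hUp]; module
  have hhalf : (‖(2⁻¹ : ℂ)‖₊ : ℝ≥0∞) = 2⁻¹ := by
    rw [nnnorm_inv]
    norm_cast
  -- pointwise trace-norm bound for the integrand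
  have hbound : ∀ s, traceNorm (P * g s * P) ≤ traceNorm T₀ := by
    intro s
    rw [hPgP s]
    refine le_trans (traceNorm_smul_le _ _) ?_
    rw [Complex.nnnorm_I, ENNReal.coe_one, one_mul]
    have hsplit : E₁ s * T₀ * (E₂ s * P)
        = (2⁻¹ : ℂ) • (E₁ s * T₀ * (E₂ s * Up))
          + (2⁻¹ : ℂ) • (E₁ s * T₀ * (E₂ s * star Up)) := by
      conv_lhs => rw [hPdecomp]
      simp only [smul_add, mul_add, mul_smul_comm, smul_smul]
    rw [hsplit]
    refine le_trans (traceNorm_add_le _ _) ?_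
    have b1 : traceNorm ((2⁻¹ : ℂ) • (E₁ s * T₀ * (E₂ s * Up)))
        ≤ (2⁻¹ : ℝ≥0∞) * traceNorm T₀ := by
      refine le_trans (traceNorm_smul_le _ _) ?_
      rw [hhalf]
      exact mul_le_mul_right (traceNorm_unitary_conj_le (E₁ s) T₀ (E₂ s * Up) (hE₁u s)
        (mul_mem (hE₂u s) hUpu)) _
    have b2 : traceNorm ((2⁻¹ : ℂ) • (E₁ s * T₀ * (E₂ s * star Up)))
        ≤ (2⁻¹ : ℝ≥0∞) * traceNorm T₀ := by
      refine le_trans (traceNorm_smul_le _ _) ?_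
      rw [hhalf]
      exact mul_le_mul_right (traceNorm_unitary_conj_le (E₁ s) T₀ (E₂ s * star Up) (hE₁u s)
        (mul_mem (hE₂u s) (Unitary.star_mem hUpu))) _
    refine le_trans (add_le_add b1 b2) ?_
    rw [← add_mul, ENNReal.inv_two_add_inv_two, one_mul]
  -- now the integral estimate
  rw [hgoal_op]
  refine traceNorm_le_of_forall _ _ fun n e f he hf => ?_
  set Creal := (traceNorm T₀).toReal with hCreal
  -- pointwise real bound
  have hptw : ∀ s, ∑ j, ‖(innerSL ℂ (f j) ((P * g s * P) (e j)) : ℂ)‖ ≤ Creal := by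
    intro s
    have heq : ∀ j : Fin n, ‖(innerSL ℂ (f j) ((P * g s * P) (e j)) : ℂ)‖
        = ‖(inner ℂ ((P * g s * P) (e j)) (f j) : ℂ)‖ := by
      intro j
      rw [innerSL_apply_apply]
      exact norm_inner_symm _ _
    simp_rw [heq]
    have hofr : ENNReal.ofReal (∑ j, ‖(inner ℂ ((P * g s * P) (e j)) (f j) : ℂ)‖)
        ≤ traceNorm T₀ := by
      rw [ENNReal.ofReal_sum_of_nonneg fun j _ => norm_nonneg _]
      simp_rw [ofReal_norm, enorm_eq_nnnorm]
      exact le_trans (sum_le_traceNorm _ he hf) (hbound s)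
    exact (ENNReal.ofReal_le_iff_le_toReal hC).mp hofr
  -- continuity of the matrix elements
  have hφc : ∀ j : Fin n, Continuous fun s =>
      (innerSL ℂ (f j) ((P * g s * P) (e j)) : ℂ) := by
    intro j
    exact (innerSL ℂ (f j)).continuous.comp
      (((continuous_const.mul hgc).mul continuous_const).clm_apply continuous_const)
  have hφint : ∀ j : Fin n, IntegrableOn
      (fun s => ‖(innerSL ℂ (f j) ((P * g s * P) (e j)) : ℂ)‖) (Set.uIoc 0 t) volume :=
    fun j => ((hφc j).norm).integrableOn_uIoc
  -- main estimate
  have hGapp : ∀ j : Fin n, (inner ℂ ((∫ s in (0:ℝ)..t, P * g s * P) (e j)) (f j) : ℂ)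
      = (starRingEnd ℂ) (∫ s in (0:ℝ)..t, (innerSL ℂ (f j) ((P * g s * P) (e j)) : ℂ)) := by
    intro j
    have hc2 : Continuous fun s => (P * g s * P) (e j) :=
      ((continuous_const.mul hgc).mul continuous_const).clm_apply continuous_const
    rw [ContinuousLinearMap.intervalIntegral_apply hintP (e j)]
    have hint2 : IntervalIntegrable (fun s => (P * g s * P) (e j)) volume 0 t :=
      hc2.intervalIntegrable 0 t
    have hcc := ContinuousLinearMap.intervalIntegral_comp_comm (innerSL ℂ (f j)) hint2
    simp only [innerSL_apply_apply] at hcc ⊢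
    rw [hcc, ← inner_conj_symm]
  calc ∑ j, (‖(inner ℂ ((∫ s in (0:ℝ)..t, P * g s * P) (e j)) (f j) : ℂ)‖₊ : ℝ≥0∞)
      = ENNReal.ofReal
          (∑ j, ‖(inner ℂ ((∫ s in (0:ℝ)..t, P * g s * P) (e j)) (f j) : ℂ)‖) := by
        rw [ENNReal.ofReal_sum_of_nonneg fun j _ => norm_nonneg _]
        simp_rw [ofReal_norm, enorm_eq_nnnorm]
    _ ≤ ENNReal.ofReal (|t| * Creal) := by
        refine ENNReal.ofReal_le_ofReal ?_
        calc ∑ j, ‖(inner ℂ ((∫ s in (0:ℝ)..t, P * g s * P) (e j)) (f j) : ℂ)‖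
            = ∑ j, ‖∫ s in (0:ℝ)..t, (innerSL ℂ (f j) ((P * g s * P) (e j)) : ℂ)‖ := by
              refine Finset.sum_congr rfl fun j _ => ?_
              rw [hGapp j, RCLike.norm_conj]
          _ ≤ ∑ j, ∫ s in Set.uIoc 0 t,
                ‖(innerSL ℂ (f j) ((P * g s * P) (e j)) : ℂ)‖ := by
              exact Finset.sum_le_sum fun j _ =>
                intervalIntegral.norm_integral_le_integral_norm_uIoc
          _ = ∫ s in Set.uIoc 0 t,
                ∑ j, ‖(innerSL ℂ (f j) ((P * g s * P) (e j)) : ℂ)‖ := by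
              rw [integral_finset_sum _ fun j _ => hφint j]
          _ ≤ ∫ _ in Set.uIoc 0 t, Creal := by
              refine integral_mono (integrable_finset_sum _ fun j _ => hφint j)
                (integrableOn_const measure_Ioc_lt_top.ne) fun s => ?_
              exact hptw s
          _ = (volume (Set.uIoc 0 t)).toReal * Creal := by
              rw [setIntegral_const, smul_eq_mul, measureReal_def]
          _ = |t| * Creal := by
              rw [Set.uIoc, Real.volume_Ioc, ENNReal.toReal_ofReal
                (by rw [sub_nonneg]; exact min_le_max)]
              congr 1
              rw [max_sub_min_eq_abs]
              simp
    _ = ENNReal.ofReal |t| * traceNorm T₀ := by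
        rw [ENNReal.ofReal_mul (abs_nonneg t), hCreal, ENNReal.ofReal_toReal hC]
end

section
/- Let φ ∈ C³([−2ρ, 2ρ]) and δ ∈ (0,1). For s ∈ (−2ρ, 2ρ), let 𝔛₁(s) = {t ∈ (−2ρ,2ρ) : φ(t) = s}, which is finite for a.e. s; for finite nonempty 𝔛 with elements ξ₁<…<ξ_N, set m_δ(𝔛) = Σ_j ρ_j^{−δ} where ρ_j = dist(ξ_j, 𝔛∖{ξ_j}) for N ≥ 2, ρ₁ = 4ρ for N = 1, and m_δ(∅) = (4ρ)^{−δ}. Then ∫_{−2ρ}^{2ρ} m_δ(𝔛₁(s)) ds ≤ C_δ ρ^{1−δ} (1 + ρ ‖φ″‖_∞), with C_δ depending only on δ. -/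
open scoped Classical

open scoped ENNReal
open MeasureTheory Set

/-- The spacing functional `m_δ` of a subset of `(−2ρ, 2ρ)`: for a finite set with at
least two points it is `Σ_j ρ_j^{−δ}` where `ρ_j` is the distance from the `j`-th point
to the rest of the set; for the empty set or a single point it is `(4ρ)^{−δ}`. -/
noncomputable def mdelta (ρ δ : ℝ) (X : Set ℝ) : ℝ :=
  if hX : X.Finite then
    if X.Subsingleton then (4*ρ) ^ (-δ)
    else ∑ ξ ∈ hX.toFinset, (Metric.infDist ξ (X \ {ξ})) ^ (-δ)
  else 0

lemma measurable_abs_rpow (c : ℝ) (hc : c ≠ 0) : Measurable fun x : ℝ => |x| ^ c := by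
  have h : (fun x : ℝ => |x| ^ c) =
      fun x => if x = 0 then 0 else Real.exp (Real.log |x| * c) := by
    funext x
    by_cases h : x = 0
    · simp [h, Real.zero_rpow hc]
    · have hx : 0 < |x| := abs_pos.mpr h
      rw [if_neg h, Real.rpow_def_of_pos hx]
  rw [h]
  exact Measurable.ite (measurableSet_singleton 0) measurable_const
    (((Real.measurable_log.comp measurable_abs).mul measurable_const).exp)


lemma comp_bound (δ a b K : ℝ) (hδ0 : 0 < δ) (hδ1 : δ < 1) (hab : a < b) (hK0 : 0 ≤ K)
    (φ D : ℝ → ℝ)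
    (hφc : ContinuousOn φ (Set.Icc a b))
    (hD1 : ∀ t ∈ Set.Ioo a b, HasDerivAt φ (D t) t)
    (hD2 : ContinuousOn D (Set.Ioo a b))
    (hDm : Measurable D)
    (I : Set ℝ) (hIo : IsOpen I) (hIp : IsPreconnected I)
    (hIsub : I ⊆ Set.Ioo a b) (hInz : ∀ x ∈ I, D x ≠ 0)
    (hK : ∀ x ∈ I, |D x| ≤ K) :
    ∃ g : ℝ → ℝ≥0∞, Measurable g ∧
      (∀ ξ ∈ I, ENNReal.ofReal (|D ξ| ^ (-δ)) ≤ g (φ ξ)) ∧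
      (∀ x ∈ I, ∀ y ∈ I, φ x = φ y → x = y) ∧
      ∫⁻ s, g s ≤ ENNReal.ofReal (K ^ (1-δ)) * volume I := by
  have hIcc : I ⊆ Set.Icc a b := hIsub.trans Set.Ioo_subset_Icc_self
  have hconv : Convex ℝ I := convex_iff_ordConnected.mpr hIp.ordConnected
  have hbdd : BddAbove (insert a I) := by
    refine ⟨b, ?_⟩
    rintro y (rfl | hy)
    · exact hab.le
    · exact (hIsub hy).2.le
  -- sign dichotomy
  have hsign : (∀ x ∈ I, 0 < D x) ∨ (∀ x ∈ I, D x < 0) := by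
    by_cases hpos : ∀ x ∈ I, 0 < D x
    · exact Or.inl hpos
    · right
      push_neg at hpos
      obtain ⟨x₀, hx₀, hx₀le⟩ := hpos
      have hx₀lt : D x₀ < 0 := lt_of_le_of_ne hx₀le (hInz x₀ hx₀)
      intro x hx
      by_contra hxge
      push_neg at hxge
      have hxpos : 0 < D x := lt_of_le_of_ne hxge (Ne.symm (hInz x hx))
      have huIcc : Set.uIcc x₀ x ⊆ I := hIp.ordConnected.uIcc_subset hx₀ hx
      have h0 : (0:ℝ) ∈ Set.uIcc (D x₀) (D x) :=
        Set.mem_uIcc.mpr (Or.inl ⟨hx₀lt.le, hxpos.le⟩)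
      obtain ⟨c, hc, hc0⟩ := intermediate_value_uIcc (hD2.mono (huIcc.trans hIsub)) h0
      exact hInz c (huIcc hc) hc0
  -- monotone inverse
  have main : ∃ xt : ℝ → ℝ, Measurable xt ∧ (∀ x ∈ I, xt (φ x) = x) ∧
      (∀ x ∈ I, ∀ y ∈ I, φ x = φ y → x = y) := by
    rcases hsign with hpos | hneg
    · have hmono : StrictMonoOn φ I := by
        apply strictMonoOn_of_deriv_pos hconv (hφc.mono hIcc)
        intro x hx
        rw [hIo.interior_eq] at hx
        rw [(hD1 x (hIsub hx)).deriv]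
        exact hpos x hx
      refine ⟨fun s => sSup (insert a {x ∈ I | φ x ≤ s}), ?_, ?_, ?_⟩
      · apply Monotone.measurable
        intro s t hst
        apply csSup_le_csSup ?_ ⟨a, Set.mem_insert _ _⟩ ?_
        · exact hbdd.mono (Set.insert_subset_insert (Set.sep_subset _ _))
        · exact Set.insert_subset_insert (fun y hy => ⟨hy.1, hy.2.trans hst⟩)
      · intro x hx
        apply le_antisymm
        · apply csSup_le ⟨a, Set.mem_insert _ _⟩
          rintro y (rfl | ⟨hy, hyle⟩)
          · exact (hIsub hx).1.le
          · by_contra hlt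
            push_neg at hlt
            exact absurd (hmono hx hy hlt) (not_lt.mpr hyle)
        · exact le_csSup (hbdd.mono (Set.insert_subset_insert (Set.sep_subset _ _)))
            (Set.mem_insert_iff.mpr (Or.inr ⟨hx, le_rfl⟩))
      · exact fun x hx y hy hxy => hmono.injOn hx hy hxy
    · have hmono : StrictAntiOn φ I := by
        apply strictAntiOn_of_deriv_neg hconv (hφc.mono hIcc)
        intro x hx
        rw [hIo.interior_eq] at hx
        rw [(hD1 x (hIsub hx)).deriv]
        exact hneg x hx
      refine ⟨fun s => sSup (insert a {x ∈ I | s ≤ φ x}), ?_, ?_, ?_⟩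
      · apply Antitone.measurable
        intro s t hst
        apply csSup_le_csSup ?_ ⟨a, Set.mem_insert _ _⟩ ?_
        · exact hbdd.mono (Set.insert_subset_insert (Set.sep_subset _ _))
        · exact Set.insert_subset_insert (fun y hy => ⟨hy.1, hst.trans hy.2⟩)
      · intro x hx
        apply le_antisymm
        · apply csSup_le ⟨a, Set.mem_insert _ _⟩
          rintro y (rfl | ⟨hy, hyle⟩)
          · exact (hIsub hx).1.le
          · by_contra hlt
            push_neg at hlt
            exact absurd (hmono hx hy hlt) (not_lt.mpr hyle)
        · exact le_csSup (hbdd.mono (Set.insert_subset_insert (Set.sep_subset _ _)))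
            (Set.mem_insert_iff.mpr (Or.inr ⟨hx, le_rfl⟩))
      · exact fun x hx y hy hxy => hmono.injOn hx hy hxy
  obtain ⟨xt, hxtm, hxt, hinj⟩ := main
  have hinj' : Set.InjOn φ I := fun x hx y hy hxy => hinj x hx y hy hxy
  have himg : MeasurableSet (φ '' I) :=
    ((hIp.image φ (hφc.mono hIcc)).ordConnected).measurableSet
  have hginner : Measurable fun s => ENNReal.ofReal (|D (xt s)| ^ (-δ)) :=
    ((measurable_abs_rpow (-δ) (by linarith)).comp (hDm.comp hxtm)).ennreal_ofReal
  refine ⟨(φ '' I).indicator (fun s => ENNReal.ofReal (|D (xt s)| ^ (-δ))),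
    hginner.indicator himg, ?_, hinj, ?_⟩
  · intro ξ hξ
    rw [Set.indicator_of_mem (Set.mem_image_of_mem φ hξ), hxt ξ hξ]
  · have hf' : ∀ x ∈ I, HasFDerivWithinAt φ ((1:ℝ →L[ℝ] ℝ).smulRight (D x)) I x :=
      fun x hx => ((hD1 x (hIsub hx)).hasDerivWithinAt).hasFDerivWithinAt
    rw [lintegral_indicator himg,
      lintegral_image_eq_lintegral_abs_det_fderiv_mul volume hIo.measurableSet hf' hinj']
    have hbound : ∀ x ∈ I,
        ENNReal.ofReal |((1:ℝ →L[ℝ] ℝ).smulRight (D x)).det| *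
          ENNReal.ofReal (|D (xt (φ x))| ^ (-δ)) ≤ ENNReal.ofReal (K ^ (1-δ)) := by
      intro x hx
      rw [ContinuousLinearMap.smulRight_one_eq_toSpanSingleton, ContinuousLinearMap.det_toSpanSingleton, hxt x hx,
        ← ENNReal.ofReal_mul (abs_nonneg _)]
      apply ENNReal.ofReal_le_ofReal
      have h0 : 0 < |D x| := abs_pos.mpr (hInz x hx)
      have : |D x| * |D x| ^ (-δ) = |D x| ^ (1-δ) := by
        rw [show (1:ℝ) - δ = 1 + (-δ) by ring, Real.rpow_add h0, Real.rpow_one]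
      rw [this]
      exact Real.rpow_le_rpow (abs_nonneg _) (hK x hx) (by linarith)
    calc ∫⁻ x in I, ENNReal.ofReal |((1:ℝ →L[ℝ] ℝ).smulRight (D x)).det| *
          ENNReal.ofReal (|D (xt (φ x))| ^ (-δ))
        ≤ ∫⁻ _ in I, ENNReal.ofReal (K ^ (1-δ)) := setLIntegral_mono measurable_const hbound
      _ = ENNReal.ofReal (K ^ (1-δ)) * volume I := setLIntegral_const _ _


lemma key (δ ρ a b M2 : ℝ) (hδ0 : 0 < δ) (hδ1 : δ < 1) (hρ : 0 < ρ)
    (hab : a < b) (hba : b - a = 4 * ρ) (hM2 : 0 ≤ M2)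
    (φ D : ℝ → ℝ)
    (hφc : ContinuousOn φ (Set.Icc a b))
    (hD1 : ∀ t ∈ Set.Ioo a b, HasDerivAt φ (D t) t)
    (hD2 : ContinuousOn D (Set.Ioo a b))
    (hD3 : ∀ x ∈ Set.Ioo a b, ∀ y ∈ Set.Ioo a b, |D x - D y| ≤ M2 * |x - y|)
    (hDm : Measurable D)
    (hcrit : ∃ c ∈ Set.Ioo a b, D c = 0) :
    ∫⁻ s in Set.Ioc a b,
        ENNReal.ofReal (mdelta ρ δ {t | t ∈ Set.Ioo a b ∧ φ t = s})
      ≤ ENNReal.ofReal ((4*ρ) ^ (-δ) * (4*ρ)) +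
        ENNReal.ofReal (M2 ^ δ * (M2*(4*ρ)) ^ (1-δ) * (4*ρ)) := by
  set U : Set ℝ := {t | t ∈ Set.Ioo a b ∧ D t ≠ 0} with hUdef
  have hUo : IsOpen U := by
    rw [isOpen_iff_mem_nhds]
    rintro t ⟨ht, hDt⟩
    have hct : ContinuousAt D t := hD2.continuousAt (isOpen_Ioo.mem_nhds ht)
    filter_upwards [hct.eventually_ne hDt, isOpen_Ioo.mem_nhds ht] with x hx1 hx2
    exact ⟨hx2, hx1⟩
  have hUsub : U ⊆ Set.Ioo a b := fun x hx => hx.1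
  -- rationals enumeration
  set r : ℕ → ℝ := fun n => ((Denumerable.eqv ℚ).symm n : ℚ) with hrdef
  have hr : ∀ x ∈ U, ∃ n : ℕ, r n ∈ connectedComponentIn U x := by
    intro x hx
    have hco : IsOpen (connectedComponentIn U x) := hUo.connectedComponentIn
    have hcn : (connectedComponentIn U x).Nonempty := ⟨x, mem_connectedComponentIn hx⟩
    obtain ⟨q, hq⟩ := DenseRange.exists_mem_open Rat.denseRange_cast hco hcn
    exact ⟨(Denumerable.eqv ℚ) q, by simpa [hrdef] using hq⟩
  set idx : ℝ → ℕ :=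
    fun x => if h : ∃ n, r n ∈ connectedComponentIn U x then Nat.find h else 0 with hidxdef
  have hidx1 : ∀ x ∈ U, r (idx x) ∈ connectedComponentIn U x := by
    intro x hx
    have h := hr x hx
    simp only [hidxdef, dif_pos h]
    exact Nat.find_spec h
  have hidx2 : ∀ x ∈ U, ∀ m, m < idx x → r m ∉ connectedComponentIn U x := by
    intro x hx m hm
    have h := hr x hx
    simp only [hidxdef, dif_pos h] at hm
    exact Nat.find_min h hm
  set act : ℕ → Prop :=
    fun n => r n ∈ U ∧ ∀ m < n, r m ∉ connectedComponentIn U (r n) with hactdef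
  set J : ℕ → Set ℝ :=
    fun n => if act n then connectedComponentIn U (r n) else ∅ with hJdef
  have hact : ∀ x ∈ U, act (idx x) ∧ J (idx x) = connectedComponentIn U x := by
    intro x hx
    have hceq : connectedComponentIn U (r (idx x)) = connectedComponentIn U x :=
      (connectedComponentIn_eq (hidx1 x hx)).symm
    have ha : act (idx x) := by
      refine ⟨(connectedComponentIn_subset U x) (hidx1 x hx), fun m hm => ?_⟩
      rw [hceq]
      exact hidx2 x hx m hm
    exact ⟨ha, by rw [hJdef]; simp only [if_pos ha]; exact hceq⟩
  have hJU : ∀ n, J n ⊆ U := by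
    intro n
    by_cases hn : act n
    · simp only [hJdef, if_pos hn]
      exact connectedComponentIn_subset U (r n)
    · simp only [hJdef, if_neg hn]
      exact Set.empty_subset _
  have hJsub : ∀ n, J n ⊆ Set.Ioo a b := fun n => (hJU n).trans hUsub
  -- per-component functions
  have hGex : ∀ n : ℕ, ∃ g : ℝ → ℝ≥0∞, Measurable g ∧
      (∀ ξ ∈ J n, ENNReal.ofReal (|D ξ| ^ (-δ)) ≤ g (φ ξ)) ∧
      (∀ x ∈ J n, ∀ y ∈ J n, φ x = φ y → x = y) ∧
      ∫⁻ s, g s ≤ ENNReal.ofReal ((M2*(4*ρ)) ^ (1-δ)) * volume (J n) := by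
    intro n
    by_cases hn : act n
    · have hJn : J n = connectedComponentIn U (r n) := by rw [hJdef]; simp only [if_pos hn]
      rw [hJn]
      apply comp_bound δ a b (M2*(4*ρ)) hδ0 hδ1 hab (by positivity) φ D hφc hD1 hD2 hDm
      · exact hUo.connectedComponentIn
      · exact (isConnected_connectedComponentIn_iff.mpr hn.1).isPreconnected
      · exact (connectedComponentIn_subset U (r n)).trans hUsub
      · exact fun x hx => ((connectedComponentIn_subset U (r n)) hx).2
      · intro x hx
        obtain ⟨c, hc, hc0⟩ := hcrit
        have hx' : x ∈ Set.Ioo a b := hUsub (connectedComponentIn_subset U (r n) hx)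
        calc |D x| = |D x - D c| := by rw [hc0, sub_zero]
          _ ≤ M2 * |x - c| := hD3 x hx' c hc
          _ ≤ M2 * (4*ρ) := by
              apply mul_le_mul_of_nonneg_left _ hM2
              rw [abs_sub_le_iff]
              constructor <;> nlinarith [hx'.1, hx'.2, hc.1, hc.2]
    · have hJn : J n = ∅ := by rw [hJdef]; simp only [if_neg hn]
      exact ⟨0, measurable_const, by simp [hJn], by simp [hJn], by simp⟩
  choose G hGm hGle hGinj hGint using hGex
  -- bad set of critical values
  have hB : volume (φ '' {t | t ∈ Set.Ioo a b ∧ D t = 0}) = 0 := by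
    apply MeasureTheory.addHaar_image_eq_zero_of_det_fderivWithin_eq_zero volume
      (f' := fun x => (1:ℝ →L[ℝ] ℝ).smulRight (D x))
    · exact fun x hx => ((hD1 x hx.1).hasDerivWithinAt).hasFDerivWithinAt
    · intro x hx
      rw [ContinuousLinearMap.smulRight_one_eq_toSpanSingleton, ContinuousLinearMap.det_toSpanSingleton]
      exact hx.2
  have hae : ∀ᵐ s : ℝ, s ∉ φ '' {t | t ∈ Set.Ioo a b ∧ D t = 0} := by
    exact measure_eq_zero_iff_ae_notMem.mp hB
  -- pointwise bound
  have hpt : ∀ s : ℝ, s ∉ φ '' {t | t ∈ Set.Ioo a b ∧ D t = 0} →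
      ENNReal.ofReal (mdelta ρ δ {t | t ∈ Set.Ioo a b ∧ φ t = s}) ≤
        ENNReal.ofReal ((4*ρ) ^ (-δ)) + ENNReal.ofReal (M2 ^ δ) * ∑' n, G n s := by
    intro s hs
    set X : Set ℝ := {t | t ∈ Set.Ioo a b ∧ φ t = s} with hXdef
    by_cases hfin : X.Finite
    swap
    · rw [mdelta, dif_neg hfin]
      simp
    by_cases hsub : X.Subsingleton
    · rw [mdelta, dif_pos hfin, if_pos hsub]
      exact le_self_add
    rw [mdelta, dif_pos hfin, if_neg hsub]
    have helt : ∀ ξ ∈ X, ξ ∈ U ∧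
        (Metric.infDist ξ (X \ {ξ})) ^ (-δ) ≤ M2 ^ δ * |D ξ| ^ (-δ) := by
      intro ξ hξX
      obtain ⟨hξI, hξφ⟩ := hξX
      have hDξ : D ξ ≠ 0 := fun h0 => hs ⟨ξ, ⟨hξI, h0⟩, hξφ⟩
      have hne : (X \ {ξ}).Nonempty := by
        obtain ⟨x, hx, y, hy, hxy⟩ := Set.not_subsingleton_iff.mp hsub
        rcases eq_or_ne x ξ with rfl | hxξ
        · exact ⟨y, hy, fun h => hxy ((Set.mem_singleton_iff.mp h) ▸ rfl)⟩
        · exact ⟨x, hx, hxξ⟩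
      have hfin' : (X \ {ξ}).Finite := hfin.subset Set.diff_subset
      obtain ⟨ξ', hξ'mem, hdist⟩ := hfin'.isCompact.exists_infDist_eq_dist hne ξ
      obtain ⟨hξ'X, hξ'ne⟩ := hξ'mem
      have hξ'I : ξ' ∈ Set.Ioo a b := hξ'X.1
      have hξξ' : ξ ≠ ξ' := fun h => hξ'ne (by simp [← h])
      have hlt : min ξ ξ' < max ξ ξ' := min_lt_max.mpr hξξ'
      have hIccsub : Set.Icc (min ξ ξ') (max ξ ξ') ⊆ Set.Icc a b :=
        Set.Icc_subset_Icc (le_min hξI.1.le hξ'I.1.le) (max_le hξI.2.le hξ'I.2.le)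
      have hIoosub : Set.Ioo (min ξ ξ') (max ξ ξ') ⊆ Set.Ioo a b := fun x hx =>
        ⟨lt_trans (lt_min hξI.1 hξ'I.1) hx.1, lt_trans hx.2 (max_lt hξI.2 hξ'I.2)⟩
      obtain ⟨c, hcmem, hc0⟩ : ∃ c ∈ Set.Ioo (min ξ ξ') (max ξ ξ'), D c = 0 := by
        apply exists_hasDerivAt_eq_zero hlt (hφc.mono hIccsub)
        · rcases le_total ξ ξ' with h | h
          · rw [min_eq_left h, max_eq_right h, hξφ, hξ'X.2]
          · rw [min_eq_right h, max_eq_left h, hξφ, hξ'X.2]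
        · exact fun x hx => hD1 x (hIoosub hx)
      have hcI : c ∈ Set.Ioo a b := hIoosub hcmem
      have hdle : |ξ - c| ≤ Metric.infDist ξ (X \ {ξ}) := by
        have hminξ : min ξ ξ' ≤ ξ := min_le_left _ _
        have hmaxξ : ξ ≤ max ξ ξ' := le_max_left _ _
        calc |ξ - c| ≤ max ξ ξ' - min ξ ξ' :=
              abs_le.mpr ⟨by linarith [hcmem.1, hcmem.2], by linarith [hcmem.1, hcmem.2]⟩
          _ = |ξ' - ξ| := max_sub_min_eq_abs ξ ξ'
          _ = |ξ - ξ'| := abs_sub_comm ξ' ξ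
          _ = dist ξ ξ' := (Real.dist_eq ξ ξ').symm
          _ = Metric.infDist ξ (X \ {ξ}) := hdist.symm
      have hDle : |D ξ| ≤ M2 * Metric.infDist ξ (X \ {ξ}) := by
        calc |D ξ| = |D ξ - D c| := by rw [hc0, sub_zero]
          _ ≤ M2 * |ξ - c| := hD3 ξ hξI c hcI
          _ ≤ M2 * Metric.infDist ξ (X \ {ξ}) := mul_le_mul_of_nonneg_left hdle hM2
      have hDpos : 0 < |D ξ| := abs_pos.mpr hDξ
      have hinf0 : 0 ≤ Metric.infDist ξ (X \ {ξ}) := Metric.infDist_nonneg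
      have hM2pos : 0 < M2 := by
        by_contra h
        push_neg at h
        have : M2 * Metric.infDist ξ (X \ {ξ}) ≤ 0 := mul_nonpos_of_nonpos_of_nonneg h hinf0
        linarith
      have hρξpos : 0 < Metric.infDist ξ (X \ {ξ}) := by nlinarith
      refine ⟨⟨hξI, hDξ⟩, ?_⟩
      have h1 : |D ξ| / M2 ≤ Metric.infDist ξ (X \ {ξ}) :=
        (div_le_iff₀ hM2pos).mpr (by linarith [hDle])
      calc (Metric.infDist ξ (X \ {ξ})) ^ (-δ) ≤ (|D ξ| / M2) ^ (-δ) :=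
            Real.rpow_le_rpow_of_nonpos (by positivity) h1 (by linarith)
        _ = M2 ^ δ * |D ξ| ^ (-δ) := by
            rw [Real.div_rpow (abs_nonneg _) hM2pos.le, Real.rpow_neg hM2pos.le δ,
              div_eq_mul_inv, inv_inv, mul_comm]
    have hXU : ∀ ξ ∈ X, ξ ∈ U := fun ξ hξ => (helt ξ hξ).1
    have hGge : ∀ ξ ∈ X, ENNReal.ofReal (|D ξ| ^ (-δ)) ≤ G (idx ξ) s := by
      intro ξ hξ
      have hU' := hXU ξ hξ
      have hmem : ξ ∈ J (idx ξ) := by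
        rw [(hact ξ hU').2]
        exact mem_connectedComponentIn hU'
      have h2 := hGle (idx ξ) ξ hmem
      rwa [hξ.2] at h2
    have hinjF : ∀ ξ ∈ X, ∀ ζ ∈ X, idx ξ = idx ζ → ξ = ζ := by
      intro ξ hξ ζ hζ he
      have hUξ := hXU ξ hξ
      have hUζ := hXU ζ hζ
      have hmemξ : ξ ∈ J (idx ξ) := by
        rw [(hact ξ hUξ).2]; exact mem_connectedComponentIn hUξ
      have hmemζ : ζ ∈ J (idx ξ) := by
        rw [he, (hact ζ hUζ).2]; exact mem_connectedComponentIn hUζ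
      exact hGinj (idx ξ) ξ hmemξ ζ hmemζ (hξ.2.trans hζ.2.symm)
    calc ENNReal.ofReal (∑ ξ ∈ hfin.toFinset, (Metric.infDist ξ (X \ {ξ})) ^ (-δ))
        = ∑ ξ ∈ hfin.toFinset, ENNReal.ofReal ((Metric.infDist ξ (X \ {ξ})) ^ (-δ)) :=
          ENNReal.ofReal_sum_of_nonneg (fun ξ _ => Real.rpow_nonneg Metric.infDist_nonneg _)
      _ ≤ ∑ ξ ∈ hfin.toFinset, ENNReal.ofReal (M2 ^ δ) * (G (idx ξ) s) := by
          apply Finset.sum_le_sum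
          intro ξ hξ
          have hξX : ξ ∈ X := hfin.mem_toFinset.mp hξ
          calc ENNReal.ofReal ((Metric.infDist ξ (X \ {ξ})) ^ (-δ))
              ≤ ENNReal.ofReal (M2 ^ δ * |D ξ| ^ (-δ)) :=
                ENNReal.ofReal_le_ofReal (helt ξ hξX).2
            _ = ENNReal.ofReal (M2 ^ δ) * ENNReal.ofReal (|D ξ| ^ (-δ)) :=
                ENNReal.ofReal_mul (Real.rpow_nonneg hM2 _)
            _ ≤ ENNReal.ofReal (M2 ^ δ) * G (idx ξ) s := mul_le_mul_right (hGge ξ hξX) _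
      _ = ENNReal.ofReal (M2 ^ δ) * ∑ ξ ∈ hfin.toFinset, G (idx ξ) s := by
          rw [Finset.mul_sum]
      _ ≤ ENNReal.ofReal (M2 ^ δ) * ∑' n, G n s := by
          apply mul_le_mul_right
          calc ∑ ξ ∈ hfin.toFinset, G (idx ξ) s
              = ∑ n ∈ hfin.toFinset.image idx, G n s := by
                rw [Finset.sum_image (fun x hx y hy he =>
                  hinjF x (hfin.mem_toFinset.mp hx) y (hfin.mem_toFinset.mp hy) he)]
            _ ≤ ∑' n, G n s := ENNReal.sum_le_tsum _
      _ ≤ _ := self_le_add_left _ _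
  -- integral assembly
  have hdisj : Pairwise (Function.onFun Disjoint J) := by
    intro m n hmn
    by_cases hm : act m
    swap
    · simp [Function.onFun, hJdef, if_neg hm]
    by_cases hn : act n
    swap
    · simp [Function.onFun, hJdef, if_neg hn]
    have hne : connectedComponentIn U (r m) ≠ connectedComponentIn U (r n) := by
      intro he
      rcases lt_or_gt_of_ne hmn with h | h
      · exact hn.2 m h (he ▸ mem_connectedComponentIn hm.1)
      · exact hm.2 n h (he.symm ▸ mem_connectedComponentIn hn.1)
    simp only [Function.onFun, hJdef, if_pos hm, if_pos hn]
    rw [Set.disjoint_left]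
    intro z hzm hzn
    exact hne ((connectedComponentIn_eq hzm).trans (connectedComponentIn_eq hzn).symm)
  have hmeasJ : ∀ n, MeasurableSet (J n) := by
    intro n
    by_cases hn : act n
    · simp only [hJdef, if_pos hn]
      exact hUo.connectedComponentIn.measurableSet
    · simp only [hJdef, if_neg hn]
      exact MeasurableSet.empty
  have htsum_meas : Measurable fun s => ∑' n, G n s := Measurable.ennreal_tsum hGm
  calc ∫⁻ s in Set.Ioc a b, ENNReal.ofReal (mdelta ρ δ {t | t ∈ Set.Ioo a b ∧ φ t = s})
      ≤ ∫⁻ s in Set.Ioc a b,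
          (ENNReal.ofReal ((4*ρ) ^ (-δ)) + ENNReal.ofReal (M2 ^ δ) * ∑' n, G n s) :=
        lintegral_mono_ae (ae_restrict_of_ae (hae.mono (fun s hs => hpt s hs)))
    _ = ENNReal.ofReal ((4*ρ) ^ (-δ)) * volume (Set.Ioc a b) +
        ∫⁻ s in Set.Ioc a b, ENNReal.ofReal (M2 ^ δ) * ∑' n, G n s := by
        rw [lintegral_add_left measurable_const, setLIntegral_const]
    _ ≤ ENNReal.ofReal ((4*ρ) ^ (-δ)) * ENNReal.ofReal (4*ρ) +
        ENNReal.ofReal (M2 ^ δ) *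
          (ENNReal.ofReal ((M2*(4*ρ)) ^ (1-δ)) * ENNReal.ofReal (4*ρ)) := by
        apply add_le_add
        · rw [Real.volume_Ioc, hba]
        · calc ∫⁻ s in Set.Ioc a b, ENNReal.ofReal (M2 ^ δ) * ∑' n, G n s
              ≤ ∫⁻ s, ENNReal.ofReal (M2 ^ δ) * ∑' n, G n s :=
                lintegral_mono' Measure.restrict_le_self le_rfl
            _ = ENNReal.ofReal (M2 ^ δ) * ∫⁻ s, ∑' n, G n s :=
                lintegral_const_mul _ htsum_meas
            _ = ENNReal.ofReal (M2 ^ δ) * ∑' n, ∫⁻ s, G n s := by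
                rw [lintegral_tsum (fun n => (hGm n).aemeasurable)]
            _ ≤ ENNReal.ofReal (M2 ^ δ) *
                ∑' n, (ENNReal.ofReal ((M2*(4*ρ)) ^ (1-δ)) * volume (J n)) :=
                mul_le_mul_right (ENNReal.tsum_le_tsum hGint) _
            _ = ENNReal.ofReal (M2 ^ δ) *
                (ENNReal.ofReal ((M2*(4*ρ)) ^ (1-δ)) * ∑' n, volume (J n)) := by
                rw [ENNReal.tsum_mul_left]
            _ ≤ _ := by
                apply mul_le_mul_right
                apply mul_le_mul_right
                rw [← measure_iUnion hdisj hmeasJ]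
                calc volume (⋃ n, J n) ≤ volume (Set.Ioo a b) :=
                      measure_mono (Set.iUnion_subset hJsub)
                  _ = ENNReal.ofReal (4*ρ) := by rw [Real.volume_Ioo, hba]
    _ ≤ ENNReal.ofReal ((4*ρ) ^ (-δ) * (4*ρ)) +
        ENNReal.ofReal (M2 ^ δ * (M2*(4*ρ)) ^ (1-δ) * (4*ρ)) := by
        apply add_le_add
        · rw [ENNReal.ofReal_mul (Real.rpow_nonneg (by positivity) _)]
        · rw [← ENNReal.ofReal_mul (Real.rpow_nonneg (mul_nonneg hM2 (by positivity)) _),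
            ← ENNReal.ofReal_mul (Real.rpow_nonneg hM2 _)]
          exact ENNReal.ofReal_le_ofReal (le_of_eq (by ring))


lemma mdelta_nonneg (ρ δ : ℝ) (hρ : 0 ≤ ρ) (X : Set ℝ) : 0 ≤ mdelta ρ δ X := by
  rw [mdelta]
  split_ifs with h1 h2
  · exact Real.rpow_nonneg (by positivity) _
  · exact Finset.sum_nonneg fun ξ _ => Real.rpow_nonneg Metric.infDist_nonneg _
  · exact le_rfl


/-- Widom's one-dimensional spacing estimate for level sets of a `C³`
function, for `δ ∈ (0,1)`. -/
theorem stmt_10 (δ : ℝ) (hδ : δ ∈ Set.Ioo (0:ℝ) 1) :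
    ∃ C > 0, ∀ ρ : ℝ, 0 < ρ → ∀ φ : ℝ → ℝ,
      ContDiffOn ℝ 3 φ (Set.Icc (-(2*ρ)) (2*ρ)) →
      ∀ M2 : ℝ,
        (∀ t ∈ Set.Icc (-(2*ρ)) (2*ρ),
          |iteratedDerivWithin 2 φ (Set.Icc (-(2*ρ)) (2*ρ)) t| ≤ M2) →
        (∫ s in (-(2*ρ))..(2*ρ),
            mdelta ρ δ {t | t ∈ Set.Ioo (-(2*ρ)) (2*ρ) ∧ φ t = s})
          ≤ C * ρ ^ (1-δ) * (1 + ρ * M2) := by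
  obtain ⟨hδ0, hδ1⟩ := hδ
  refine ⟨16, by norm_num, ?_⟩
  intro ρ hρ φ hφ M2 hM2b
  set a : ℝ := -(2*ρ) with hadef
  set b : ℝ := 2*ρ with hbdef
  have hab : a < b := by rw [hadef, hbdef]; linarith
  have hba : b - a = 4 * ρ := by rw [hadef, hbdef]; ring
  have hM2 : 0 ≤ M2 := le_trans (abs_nonneg _)
    (hM2b 0 ⟨by rw [hadef]; linarith, by rw [hbdef]; linarith⟩)
  have huniq : UniqueDiffOn ℝ (Set.Icc a b) := uniqueDiffOn_Icc hab
  have hφc : ContinuousOn φ (Set.Icc a b) := hφ.continuousOn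
  have hint : Set.Ioo a b ⊆ Set.Icc a b := Set.Ioo_subset_Icc_self
  have hdiff : DifferentiableOn ℝ φ (Set.Icc a b) := hφ.differentiableOn (by norm_num)
  have hD1 : ∀ t ∈ Set.Ioo a b, HasDerivAt φ (deriv φ t) t := by
    intro t ht
    exact ((hdiff t (hint ht)).differentiableAt (Icc_mem_nhds ht.1 ht.2)).hasDerivAt
  have hDW : Set.EqOn (derivWithin φ (Set.Icc a b)) (deriv φ) (Set.Ioo a b) :=
    fun t ht => derivWithin_of_mem_nhds (Icc_mem_nhds ht.1 ht.2)
  have hC2 : ContDiffOn ℝ 2 (derivWithin φ (Set.Icc a b)) (Set.Icc a b) :=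
    hφ.derivWithin huniq (by norm_num)
  have hD2 : ContinuousOn (deriv φ) (Set.Ioo a b) :=
    (hC2.continuousOn.mono hint).congr hDW.symm
  have hdW : DifferentiableOn ℝ (derivWithin φ (Set.Icc a b)) (Set.Icc a b) :=
    hC2.differentiableOn (by norm_num)
  have hbound : ∀ t ∈ Set.Icc a b,
      ‖derivWithin (derivWithin φ (Set.Icc a b)) (Set.Icc a b) t‖ ≤ M2 := by
    intro t ht
    have h2 : iteratedDerivWithin 2 φ (Set.Icc a b) t =
        derivWithin (derivWithin φ (Set.Icc a b)) (Set.Icc a b) t := by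
      rw [iteratedDerivWithin_succ]
      apply derivWithin_congr
      · exact fun y hy => congrFun iteratedDerivWithin_one y
      · exact congrFun iteratedDerivWithin_one t
    rw [Real.norm_eq_abs, ← h2]
    exact hM2b t ht
  have hD3 : ∀ x ∈ Set.Ioo a b, ∀ y ∈ Set.Ioo a b,
      |deriv φ x - deriv φ y| ≤ M2 * |x - y| := by
    intro x hx y hy
    have h := Convex.norm_image_sub_le_of_norm_derivWithin_le hdW hbound
      (convex_Icc a b) (hint hy) (hint hx)
    rw [Real.norm_eq_abs, Real.norm_eq_abs, hDW hx, hDW hy] at h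
    exact h
  by_cases hcrit : ∃ c ∈ Set.Ioo a b, deriv φ c = 0
  · -- main case
    rw [intervalIntegral.integral_of_le hab.le]
    by_cases hint2 : MeasureTheory.IntegrableOn
        (fun s => mdelta ρ δ {t | t ∈ Set.Ioo a b ∧ φ t = s}) (Set.Ioc a b) volume
    swap
    · rw [MeasureTheory.integral_undef hint2]
      nlinarith [Real.rpow_nonneg hρ.le (1-δ), mul_nonneg hρ.le hM2]
    · rw [MeasureTheory.integral_eq_lintegral_of_nonneg_ae
        (Filter.Eventually.of_forall (fun s => mdelta_nonneg ρ δ hρ.le _))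
        hint2.aestronglyMeasurable]
      apply ENNReal.toReal_le_of_le_ofReal
        (by nlinarith [Real.rpow_nonneg hρ.le (1-δ), mul_nonneg hρ.le hM2])
      calc ∫⁻ s in Set.Ioc a b,
            ENNReal.ofReal (mdelta ρ δ {t | t ∈ Set.Ioo a b ∧ φ t = s})
          ≤ ENNReal.ofReal ((4*ρ) ^ (-δ) * (4*ρ)) +
            ENNReal.ofReal (M2 ^ δ * (M2*(4*ρ)) ^ (1-δ) * (4*ρ)) :=
            key δ ρ a b M2 hδ0 hδ1 hρ hab hba hM2 φ (deriv φ) hφc hD1 hD2 hD3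
              (measurable_deriv φ) hcrit
        _ ≤ ENNReal.ofReal (16 * ρ ^ (1-δ) * (1 + ρ * M2)) := by
            rw [← ENNReal.ofReal_add
              (by positivity)
              (by positivity)]
            apply ENNReal.ofReal_le_ofReal
            -- real arithmetic
            have h4ρ : (0:ℝ) < 4*ρ := by linarith
            have e1 : (4*ρ) ^ (-δ) * (4*ρ) = (4*ρ) ^ (1-δ) := by
              rw [show (1:ℝ) - δ = -δ + 1 by ring, Real.rpow_add h4ρ, Real.rpow_one]
            have e2 : (4*ρ:ℝ) ^ (1-δ) = 4 ^ (1-δ) * ρ ^ (1-δ) :=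
              Real.mul_rpow (by norm_num) hρ.le
            have e3 : (4:ℝ) ^ (1-δ) ≤ 4 := by
              calc (4:ℝ) ^ (1-δ) ≤ 4 ^ (1:ℝ) :=
                    Real.rpow_le_rpow_of_exponent_le (by norm_num) (by linarith)
                _ = 4 := Real.rpow_one 4
            have hρδ : (0:ℝ) ≤ ρ ^ (1-δ) := Real.rpow_nonneg hρ.le _
            have h1 : (4*ρ) ^ (-δ) * (4*ρ) ≤ 4 * ρ ^ (1-δ) := by
              rw [e1, e2]
              exact mul_le_mul_of_nonneg_right e3 hρδ
            have h2 : M2 ^ δ * (M2*(4*ρ)) ^ (1-δ) * (4*ρ) ≤ 16 * ρ ^ (1-δ) * (ρ * M2) := by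
              rcases eq_or_lt_of_le hM2 with hM20 | hM2p
              · rw [← hM20]
                rw [Real.zero_rpow hδ0.ne']
                nlinarith [mul_nonneg hρ.le hρδ]
              · have eM : M2 ^ δ * (M2*(4*ρ)) ^ (1-δ) = M2 * (4*ρ) ^ (1-δ) := by
                  rw [Real.mul_rpow hM2 h4ρ.le, ← mul_assoc, ← Real.rpow_add hM2p,
                    show δ + (1-δ) = (1:ℝ) by ring, Real.rpow_one]
                rw [eM, e2]
                nlinarith [mul_nonneg hρ.le hρδ, mul_nonneg (mul_nonneg hρ.le hρδ) hM2]
            nlinarith [mul_nonneg hρ.le hρδ, mul_nonneg (mul_nonneg hρ.le hρδ) hM2]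
  · -- monotone case
    push_neg at hcrit
    have hsign : (∀ x ∈ Set.Ioo a b, 0 < deriv φ x) ∨
        (∀ x ∈ Set.Ioo a b, deriv φ x < 0) := by
      by_cases hpos : ∀ x ∈ Set.Ioo a b, 0 < deriv φ x
      · exact Or.inl hpos
      · right
        push_neg at hpos
        obtain ⟨x₀, hx₀, hx₀le⟩ := hpos
        have hx₀lt : deriv φ x₀ < 0 := lt_of_le_of_ne hx₀le (hcrit x₀ hx₀)
        intro x hx
        by_contra hxge
        push_neg at hxge
        have hxpos : 0 < deriv φ x := lt_of_le_of_ne hxge (Ne.symm (hcrit x hx))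
        have huIcc : Set.uIcc x₀ x ⊆ Set.Ioo a b :=
          (Set.ordConnected_Ioo).uIcc_subset hx₀ hx
        have h0 : (0:ℝ) ∈ Set.uIcc (deriv φ x₀) (deriv φ x) :=
          Set.mem_uIcc.mpr (Or.inl ⟨hx₀lt.le, hxpos.le⟩)
        obtain ⟨c, hc, hc0⟩ := intermediate_value_uIcc (hD2.mono huIcc) h0
        exact hcrit c (huIcc hc) hc0
    have hinj : Set.InjOn φ (Set.Icc a b) := by
      rcases hsign with hpos | hneg
      · exact (strictMonoOn_of_deriv_pos (convex_Icc a b) hφc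
          (fun x hx => hpos x (by rwa [interior_Icc] at hx))).injOn
      · exact (strictAntiOn_of_deriv_neg (convex_Icc a b) hφc
          (fun x hx => hneg x (by rwa [interior_Icc] at hx))).injOn
    have hms : ∀ s : ℝ, {t | t ∈ Set.Ioo a b ∧ φ t = s}.Subsingleton := by
      intro s x hx y hy
      exact hinj (hint hx.1) (hint hy.1) (hx.2.trans hy.2.symm)
    have hconst : ∀ s : ℝ, mdelta ρ δ {t | t ∈ Set.Ioo a b ∧ φ t = s} = (4*ρ) ^ (-δ) := by
      intro s
      rw [mdelta, dif_pos ((hms s).finite), if_pos (hms s)]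
    calc (∫ s in a..b, mdelta ρ δ {t | t ∈ Set.Ioo a b ∧ φ t = s})
        = ∫ _ in a..b, (4*ρ) ^ (-δ) :=
          intervalIntegral.integral_congr (fun s _ => hconst s)
      _ = (b - a) * (4*ρ) ^ (-δ) := by
          rw [intervalIntegral.integral_const, smul_eq_mul]
      _ ≤ 16 * ρ ^ (1-δ) * (1 + ρ * M2) := by
          rw [hba]
          have h4ρ : (0:ℝ) < 4*ρ := by linarith
          have e1 : (4*ρ) * (4*ρ) ^ (-δ) = (4*ρ) ^ (1-δ) := by
            rw [show (1:ℝ) - δ = 1 + -δ by ring, Real.rpow_add h4ρ, Real.rpow_one]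
          have e2 : (4*ρ:ℝ) ^ (1-δ) = 4 ^ (1-δ) * ρ ^ (1-δ) :=
            Real.mul_rpow (by norm_num) hρ.le
          have e3 : (4:ℝ) ^ (1-δ) ≤ 4 := by
            calc (4:ℝ) ^ (1-δ) ≤ 4 ^ (1:ℝ) :=
                  Real.rpow_le_rpow_of_exponent_le (by norm_num) (by linarith)
              _ = 4 := Real.rpow_one 4
          have hρδ : (0:ℝ) ≤ ρ ^ (1-δ) := Real.rpow_nonneg hρ.le _
          rw [e1, e2]
          nlinarith [mul_nonneg hρ.le hρδ, mul_nonneg (mul_nonneg hρ.le hρδ) hM2]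
end
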